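/- Two spatial matrices of the same size m×n×q are equivalent if and only if their regular parts are equivalent. In particular: if 𝔸 = 𝔸' ⊕ 𝕆 and 𝔹 = 𝔹' ⊕ 𝕆 where 𝔸', 𝔹' are regular r1×r2×r3 spatial matrices (all three slice systems have full rank) and 𝕆 is the zero spatial matrix of complementary size, then 𝔸 is equivalent to 𝔹 iff 𝔸' is equivalent to 𝔹'. -/

import Mathlib

open Matrix

/-- Equivalence of spatial matrices: `b` is obtained from `a` by an equivalence
transformation given by invertible matrices `R`, `S`, `T`. -/
def SpatialEquiv {k : Type*} [Field k] {I1 I2 I3 : Type*}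
    [Fintype I1] [DecidableEq I1] [Fintype I2] [DecidableEq I2]
    [Fintype I3] [DecidableEq I3] (a b : I1 → I2 → I3 → k) : Prop :=
  ∃ (R : Matrix I1 I1 k) (S : Matrix I2 I2 k) (T : Matrix I3 I3 k),
    IsUnit R ∧ IsUnit S ∧ IsUnit T ∧
    ∀ i' j' k', b i' j' k' = ∑ i, ∑ j, ∑ kk, a i j kk * R i i' * S j j' * T kk k'

/-- A spatial matrix is regular if each of its three systems of slice matrices has full
rank. -/
def SpatialRegular {k : Type*} [Field k] {I1 I2 I3 : Type*}
    [Fintype I1] [Fintype I2] [Fintype I3] (a : I1 → I2 → I3 → k) : Prop :=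
  Module.finrank k (Submodule.span k
      (Set.range fun i => (Matrix.of fun j kk => a i j kk : Matrix I2 I3 k))) = Fintype.card I1 ∧
  Module.finrank k (Submodule.span k
      (Set.range fun j => (Matrix.of fun i kk => a i j kk : Matrix I1 I3 k))) = Fintype.card I2 ∧
  Module.finrank k (Submodule.span k
      (Set.range fun kk => (Matrix.of fun i j => a i j kk : Matrix I1 I2 k))) = Fintype.card I3

/-- The direct sum `𝔸' ⊕ 𝕆` of a spatial matrix with a zero spatial matrix. -/
def spatialExt {k : Type*} [Field k] {r1 r2 r3 p1 p2 p3 : ℕ}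
    (a : Fin r1 → Fin r2 → Fin r3 → k) :
    (Fin r1 ⊕ Fin p1) → (Fin r2 ⊕ Fin p2) → (Fin r3 ⊕ Fin p3) → k
  | Sum.inl i, Sum.inl j, Sum.inl kk => a i j kk
  | _, _, _ => 0

section Aux

variable {k : Type*} [Field k] {r1 r2 r3 p1 p2 p3 : ℕ}

/-- Key lemma: if a family `v` spanning a space of full dimension `n` is expressed as
linear combinations of a family `w` via a square matrix `M`, then `M` is invertible. -/
lemma key_isUnit {V : Type*} [AddCommGroup V] [Module k V] {n : ℕ}
    (v w : Fin n → V) (M : Matrix (Fin n) (Fin n) k)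
    (hv : ∀ i', v i' = ∑ i, M i i' • w i)
    (h : Module.finrank k (Submodule.span k (Set.range v)) = n) : IsUnit M := by
  classical
  set ψ : (Fin n → k) →ₗ[k] V := Fintype.linearCombination k w with hψ
  set φ : (Fin n → k) →ₗ[k] V := ψ.comp M.mulVecLin with hφ
  have hrange : Set.range v ⊆ ↑(LinearMap.range φ) := by
    rintro _ ⟨i', rfl⟩
    refine ⟨Pi.single i' 1, ?_⟩
    simp only [hφ, LinearMap.comp_apply, mulVecLin_apply, hψ,
      Fintype.linearCombination_apply, mulVec_single, mul_one, MulOpposite.op_one, one_smul, Matrix.col_apply]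
    exact (hv i').symm
  have hspan : Submodule.span k (Set.range v) ≤ LinearMap.range φ :=
    Submodule.span_le.2 hrange
  have h1 : n ≤ Module.finrank k (LinearMap.range M.mulVecLin) := by
    have h2 : Module.finrank k (LinearMap.range φ) ≤
        Module.finrank k (LinearMap.range M.mulVecLin) := by
      rw [hφ, LinearMap.range_comp]
      exact Submodule.finrank_map_le _ _
    have h3 := Submodule.finrank_mono hspan
    omega
  have htop : LinearMap.range M.mulVecLin = ⊤ := by
    apply Submodule.eq_top_of_finrank_eq
    have := Submodule.finrank_le (LinearMap.range M.mulVecLin)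
    simp [Module.finrank_pi] at this ⊢
    omega
  exact mulVec_injective_iff_isUnit.1
    ((LinearMap.injective_iff_surjective).2 (LinearMap.range_eq_top.1 htop))

@[simp] lemma spatialExt_inl (a : Fin r1 → Fin r2 → Fin r3 → k) (i j kk) :
    spatialExt (p1 := p1) (p2 := p2) (p3 := p3) a (Sum.inl i) (Sum.inl j) (Sum.inl kk)
      = a i j kk := rfl

@[simp] lemma spatialExt_inr1 (a : Fin r1 → Fin r2 → Fin r3 → k) (i : Fin p1) (j) (kk) :
    spatialExt (p1 := p1) (p2 := p2) (p3 := p3) a (Sum.inr i) j kk = 0 := by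
  cases j <;> cases kk <;> rfl

@[simp] lemma spatialExt_inr2 (a : Fin r1 → Fin r2 → Fin r3 → k) (i) (j : Fin p2) (kk) :
    spatialExt (p1 := p1) (p2 := p2) (p3 := p3) a i (Sum.inr j) kk = 0 := by
  cases i <;> cases kk <;> rfl

@[simp] lemma spatialExt_inr3 (a : Fin r1 → Fin r2 → Fin r3 → k) (i) (j) (kk : Fin p3) :
    spatialExt (p1 := p1) (p2 := p2) (p3 := p3) a i j (Sum.inr kk) = 0 := by
  cases i <;> cases j <;> rfl

end Aux

/-- Two spatial matrices of the same size are equivalent if and only if their regular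
parts are equivalent. -/
theorem spatialEquiv_iff_regular_parts_equiv
    (k : Type*) [Field k] (r1 r2 r3 p1 p2 p3 : ℕ)
    (a b : Fin r1 → Fin r2 → Fin r3 → k)
    (ha : SpatialRegular a) (hb : SpatialRegular b) :
    SpatialEquiv (spatialExt (p1 := p1) (p2 := p2) (p3 := p3) a)
        (spatialExt (p1 := p1) (p2 := p2) (p3 := p3) b)
      ↔ SpatialEquiv a b := by
  classical
  constructor
  · rintro ⟨R, S, T, hR, hS, hT, h⟩
    set R' : Matrix (Fin r1) (Fin r1) k := fun i i' => R (Sum.inl i) (Sum.inl i') with hR'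
    set S' : Matrix (Fin r2) (Fin r2) k := fun j j' => S (Sum.inl j) (Sum.inl j') with hS'
    set T' : Matrix (Fin r3) (Fin r3) k := fun t t' => T (Sum.inl t) (Sum.inl t') with hT'
    have hred : ∀ i' j' k', b i' j' k'
        = ∑ i, ∑ j, ∑ kk, a i j kk * R' i i' * S' j j' * T' kk k' := by
      intro i' j' k'
      have := h (Sum.inl i') (Sum.inl j') (Sum.inl k')
      simpa [Fintype.sum_sum_type] using this
    have hvR : ∀ i', (Matrix.of fun j kk => b i' j kk : Matrix (Fin r2) (Fin r3) k)
        = ∑ i, R' i i' •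
          (Matrix.of fun j' k' => ∑ j, ∑ kk, a i j kk * S' j j' * T' kk k') := by
      intro i'
      ext j' k'
      simp only [Matrix.sum_apply, Matrix.smul_apply, Matrix.of_apply, smul_eq_mul]
      rw [hred]
      refine Finset.sum_congr rfl fun i _ => ?_
      rw [Finset.mul_sum]
      refine Finset.sum_congr rfl fun j _ => ?_
      rw [Finset.mul_sum]
      exact Finset.sum_congr rfl fun kk _ => by ring
    have hvS : ∀ j', (Matrix.of fun i kk => b i j' kk : Matrix (Fin r1) (Fin r3) k)
        = ∑ j, S' j j' •
          (Matrix.of fun i' k' => ∑ i, ∑ kk, a i j kk * R' i i' * T' kk k') := by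
      intro j'
      ext i' k'
      simp only [Matrix.sum_apply, Matrix.smul_apply, Matrix.of_apply, smul_eq_mul]
      rw [hred, Finset.sum_comm]
      refine Finset.sum_congr rfl fun j _ => ?_
      rw [Finset.mul_sum]
      refine Finset.sum_congr rfl fun i _ => ?_
      rw [Finset.mul_sum]
      exact Finset.sum_congr rfl fun kk _ => by ring
    have hvT : ∀ k', (Matrix.of fun i j => b i j k' : Matrix (Fin r1) (Fin r2) k)
        = ∑ kk, T' kk k' •
          (Matrix.of fun i' j' => ∑ i, ∑ j, a i j kk * R' i i' * S' j j') := by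
      intro k'
      ext i' j'
      simp only [Matrix.sum_apply, Matrix.smul_apply, Matrix.of_apply, smul_eq_mul]
      rw [hred]
      calc ∑ i, ∑ j, ∑ kk, a i j kk * R' i i' * S' j j' * T' kk k'
          = ∑ i, ∑ kk, ∑ j, a i j kk * R' i i' * S' j j' * T' kk k' :=
            Finset.sum_congr rfl fun i _ => Finset.sum_comm
        _ = ∑ kk, ∑ i, ∑ j, a i j kk * R' i i' * S' j j' * T' kk k' :=
            Finset.sum_comm
        _ = ∑ kk, T' kk k' * ∑ i, ∑ j, a i j kk * R' i i' * S' j j' := by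
            refine Finset.sum_congr rfl fun kk _ => ?_
            rw [Finset.mul_sum]
            refine Finset.sum_congr rfl fun i _ => ?_
            rw [Finset.mul_sum]
            exact Finset.sum_congr rfl fun j _ => by ring
    refine ⟨R', S', T', ?_, ?_, ?_, hred⟩
    · exact key_isUnit _ _ R' hvR (by simpa using hb.1)
    · exact key_isUnit _ _ S' hvS (by simpa using hb.2.1)
    · exact key_isUnit _ _ T' hvT (by simpa using hb.2.2)
  · rintro ⟨R, S, T, hR, hS, hT, h⟩
    refine ⟨fromBlocks R 0 0 (1 : Matrix (Fin p1) (Fin p1) k),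
        fromBlocks S 0 0 (1 : Matrix (Fin p2) (Fin p2) k),
        fromBlocks T 0 0 (1 : Matrix (Fin p3) (Fin p3) k), ?_, ?_, ?_, ?_⟩
    · rw [Matrix.isUnit_iff_isUnit_det, det_fromBlocks_zero₂₁]
      simpa using (Matrix.isUnit_iff_isUnit_det _).1 hR
    · rw [Matrix.isUnit_iff_isUnit_det, det_fromBlocks_zero₂₁]
      simpa using (Matrix.isUnit_iff_isUnit_det _).1 hS
    · rw [Matrix.isUnit_iff_isUnit_det, det_fromBlocks_zero₂₁]
      simpa using (Matrix.isUnit_iff_isUnit_det _).1 hT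
    · rintro (i' | i') (j' | j') (k' | k') <;>
        simp [Fintype.sum_sum_type, Matrix.fromBlocks_apply₁₁, Matrix.fromBlocks_apply₁₂,
          h]
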